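/- Under the hypotheses of the Martingale Sample-Path Bound (n independent stationary MMOO sources with rates μ, λ, peak rate P, server rate C = nc, p < ρ < 1, P > c), the FIFO virtual delay satisfies P(W_1(t) > d) ≤ K^n e^{-γ C d}, where K = ρ((ρ-p)/(1-p))^{p/ρ-1} and γ = (λ+μ)(1-ρ)/(P-c), given the sample-path bound P(sup_{0≤s<t-u}{A_1(s,t-u)+A_2(s,t)-C(t-s)} > σ) ≤ K^n e^{-γ(C_1 u + σ)} and the FIFO service process S_1(s,t) = [C(t-s) - A_2(s,t-x)]_+ · 1{t-s > x} with x = d. -/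
import Mathlib


open MeasureTheory

/-- Martingale FIFO delay bound: given the martingale sample-path bound
`P(sup_{0≤s<t-u}{A₁(s,t-u)+A₂(s,t)-C(t-s)} > σ) ≤ Kⁿ e^{-γ(C₁u+σ)}` and the FIFO
service process `S₁(s,t) = [C(t-s) - A₂(s,t-x)]₊ · 1{t-s > x}` with `x = d`, the
virtual delay `W₁(t) = inf{e ≥ 0 : A₁(t-e) ≤ D₁(t)}` satisfies
`P(W₁(t) > d) ≤ Kⁿ e^{-γ C d}`, with `K = ρ((ρ-p)/(1-p))^{p/ρ-1}` and
`γ = (λ+μ)(1-ρ)/(P-c)`. -/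
theorem martingale_fifo_delay_bound
    {Ω : Type*} {m0 : MeasurableSpace Ω} (μmeas : Measure Ω) [IsProbabilityMeasure μmeas]
    (lam mu P c : ℝ) (hlam : 0 < lam) (hmu : 0 < mu) (hc : 0 < c) (hPc : c < P)
    (n₁ n₂ : ℕ) (n : ℕ) (hn : n = n₁ + n₂)
    (p ρ K γ C C₁ : ℝ)
    (hp : p = mu / (lam + mu)) (hρ : ρ = p * P / c) (hρ1 : ρ < 1)
    (hK : K = ρ * ((ρ - p) / (1 - p)) ^ (p / ρ - 1))
    (hγ : γ = (lam + mu) * (1 - ρ) / (P - c))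
    (hC : C = (n : ℝ) * c) (hC₁ : C₁ = (n₁ : ℝ) * c)
    (A₁ A₂ D₁ : Ω → ℝ → ℝ)
    (hA₁mono : ∀ ω, Monotone (A₁ ω)) (hA₂mono : ∀ ω, Monotone (A₂ ω))
    -- the martingale sample-path bound (Theorem 1)
    (hSP : ∀ u σ t : ℝ, 0 ≤ u → u ≤ t →
      μmeas {ω | ∃ s, 0 ≤ s ∧ s < t - u ∧
          (A₁ ω (t - u) - A₁ ω s) + (A₂ ω t - A₂ ω s) - C * (t - s) > σ}
        ≤ ENNReal.ofReal (K ^ n * Real.exp (-γ * (C₁ * u + σ))))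
    (t d : ℝ) (hd : 0 ≤ d) (hdt : d ≤ t)
    -- the FIFO service-curve property with free parameter x = d
    (hSC : ∀ ω, D₁ ω t ≥
      ⨅ s : Set.Icc (0 : ℝ) t, (A₁ ω s +
        (if t - (s : ℝ) > d then
          max (C * (t - (s : ℝ)) - (A₂ ω (t - d) - A₂ ω s)) 0 else 0)))
    (W₁ : Ω → ℝ)
    (hW₁ : ∀ ω, W₁ ω = sInf {e : ℝ | 0 ≤ e ∧ A₁ ω (t - e) ≤ D₁ ω t}) :
    μmeas {ω | W₁ ω > d} ≤ ENNReal.ofReal (K ^ n * Real.exp (-γ * C * d)) := by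
  have h0t : (0 : ℝ) ≤ t := le_trans hd hdt
  have key : {ω | W₁ ω > d} ⊆ {ω | ∃ s, 0 ≤ s ∧ s < (t - d) - 0 ∧
      (A₁ ω ((t - d) - 0) - A₁ ω s) + (A₂ ω (t - d) - A₂ ω s) - C * ((t - d) - s) > C * d} := by
    intro ω hω
    by_contra hcon
    simp only [Set.mem_setOf_eq, not_exists, not_and, not_lt, sub_zero] at hcon
    have hle : A₁ ω (t - d) ≤ D₁ ω t := by
      refine le_trans ?_ (hSC ω)
      have hne : Nonempty (Set.Icc (0 : ℝ) t) := ⟨⟨0, le_refl 0, h0t⟩⟩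
      apply le_ciInf
      rintro ⟨s, hs0, hst⟩
      by_cases hcase : t - s > d
      · simp only [hcase, if_true]
        have hslt : s < t - d := by linarith
        have hb := hcon s hs0 hslt
        have h1 : A₁ ω (t - d) ≤ A₁ ω s + (C * (t - s) - (A₂ ω (t - d) - A₂ ω s)) := by
          nlinarith [hb]
        exact h1.trans (by gcongr; exact le_max_left _ _)
      · simp only [hcase, if_false, add_zero]
        exact hA₁mono ω (by linarith)
    have hbdd : BddBelow {e : ℝ | 0 ≤ e ∧ A₁ ω (t - e) ≤ D₁ ω t} :=
      ⟨0, fun e he => he.1⟩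
    have hWd : W₁ ω ≤ d := by
      rw [hW₁]; exact csInf_le hbdd ⟨hd, hle⟩
    exact absurd hω (not_lt.mpr hWd)
  calc μmeas {ω | W₁ ω > d}
      ≤ _ := measure_mono key
    _ ≤ ENNReal.ofReal (K ^ n * Real.exp (-γ * (C₁ * 0 + C * d))) :=
        hSP 0 (C * d) (t - d) le_rfl (by linarith)
    _ = ENNReal.ofReal (K ^ n * Real.exp (-γ * C * d)) := by
        congr 2
        ring_nf
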